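/- (Chvátal–Hanson, one case.) Let n, ν, Δ be positive integers with Δ ≥ 2ν + 1 and n ≥ ν + Δ + 1. Then the maximum number of edges of a graph on n vertices whose matching number is at most ν and whose maximum degree is at most Δ equals νΔ. -/

import Mathlib

open SimpleGraph

/-- The join `G ∇ H` of two graphs: disjoint union together with all cross edges. -/
def graphJoin {α β : Type} (G : SimpleGraph α) (H : SimpleGraph β) :
    SimpleGraph (α ⊕ β) :=
  SimpleGraph.fromRel (fun x y =>
    (∃ a b, x = Sum.inl a ∧ y = Sum.inr b) ∨
    (∃ a b, x = Sum.inl a ∧ y = Sum.inl b ∧ G.Adj a b) ∨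
    (∃ a b, x = Sum.inr a ∧ y = Sum.inr b ∧ H.Adj a b))

/-- The disjoint union `G ∪ H` of two graphs. -/
def graphDisjUnion {α β : Type} (G : SimpleGraph α) (H : SimpleGraph β) :
    SimpleGraph (α ⊕ β) :=
  SimpleGraph.fromRel (fun x y =>
    (∃ a b, x = Sum.inl a ∧ y = Sum.inl b ∧ G.Adj a b) ∨
    (∃ a b, x = Sum.inr a ∧ y = Sum.inr b ∧ H.Adj a b))

/-- The matching `M_m` consisting of `m` pairwise disjoint edges. -/
def matchingGraph (m : ℕ) : SimpleGraph (Fin (2 * m)) :=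
  SimpleGraph.fromRel (fun x y => (x : ℕ) / 2 = (y : ℕ) / 2)

/-- The star `S_m` on `m` vertices, with centre `0`. -/
def starGraph (m : ℕ) : SimpleGraph (Fin m) :=
  SimpleGraph.fromRel (fun x _ => (x : ℕ) = 0)

/-- `G` contains a (not necessarily induced) copy of `H` as a subgraph. -/
def ContainsCopy {α β : Type} (H : SimpleGraph α) (G : SimpleGraph β) : Prop :=
  ∃ f : α ↪ β, ∀ ⦃a b : α⦄, H.Adj a b → G.Adj (f a) (f b)

/-- `G` is `H`-free: it contains no subgraph isomorphic to `H`. -/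
def IsFreeOf {α β : Type} (H : SimpleGraph α) (G : SimpleGraph β) : Prop :=
  ¬ ContainsCopy H G

/-- The number of edges of a graph. -/
noncomputable def eCount {α : Type} (G : SimpleGraph α) : ℕ :=
  Nat.card G.edgeSet

/-- `G ∈ EX(n, H)`: `G` is an `n`-vertex `H`-free graph with the maximum possible
number of edges among all `n`-vertex `H`-free graphs. -/
def IsExtremalFree {α : Type} (H : SimpleGraph α) (n : ℕ) (G : SimpleGraph (Fin n)) : Prop :=
  IsFreeOf H G ∧ ∀ G' : SimpleGraph (Fin n), IsFreeOf H G' → eCount G' ≤ eCount G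

/-- The Turán number `ex(n, H)`. -/
noncomputable def exNum {α : Type} (n : ℕ) (H : SimpleGraph α) : ℕ :=
  sSup {m | ∃ G : SimpleGraph (Fin n), IsFreeOf H G ∧ eCount G = m}

/-- `Fo` is an odd-ballooning of `F` in which every substituted odd cycle has length
at least five: every edge `uv` of `F` is replaced by an odd cycle through `u` and `v`
(consisting of the edge `f u f v` together with a path of even length at least four
joining `f v` to `f u`), all new vertices of different substituted cycles being distinct. -/
def IsOddBallooning {α β : Type} (F : SimpleGraph α) (Fo : SimpleGraph β) : Prop :=
  ∃ (f : α ↪ β) (P : ∀ u v : α, F.Adj u v → Fo.Walk (f v) (f u)),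
    (∀ u v : α, F.Adj u v → Fo.Adj (f u) (f v)) ∧
    (∀ u v : α, ∀ h : F.Adj u v, (P u v h).IsPath) ∧
    (∀ u v : α, ∀ h : F.Adj u v, 4 ≤ (P u v h).length ∧ Even (P u v h).length) ∧
    (∀ u v : α, ∀ h : F.Adj u v, P v u h.symm = (P u v h).reverse) ∧
    (∀ u v : α, ∀ h : F.Adj u v, ∀ b : β, b ∈ (P u v h).support →
      b = f u ∨ b = f v ∨ b ∉ Set.range f) ∧
    (∀ u v u' v' : α, ∀ h : F.Adj u v, ∀ h' : F.Adj u' v', s(u, v) ≠ s(u', v') →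
      ∀ b : β, b ∈ (P u v h).support → b ∈ (P u' v' h').support → b ∈ Set.range f) ∧
    (∀ b : β, b ∈ Set.range f ∨ ∃ u v : α, ∃ h : F.Adj u v, b ∈ (P u v h).support) ∧
    (∀ e ∈ Fo.edgeSet, (∃ u v : α, ∃ _ : F.Adj u v, e = s(f u, f v)) ∨
      ∃ u v : α, ∃ h : F.Adj u v, e ∈ (P u v h).edges)

/-- The connected component `C` of `F` is an even cycle (of length at least four). -/
def IsEvenCycleComp {α : Type} (F : SimpleGraph α) (C : F.ConnectedComponent) : Prop :=
  ∃ m : ℕ, 2 ≤ m ∧ Nonempty ((F.induce C.supp) ≃g cycleGraph (2 * m))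

/-- Every connected component of `F` is either a non-trivial tree or an even cycle. -/
def GoodComponents {α : Type} (F : SimpleGraph α) : Prop :=
  ∀ C : F.ConnectedComponent,
    ((F.induce C.supp).IsTree ∧ 2 ≤ Nat.card C.supp) ∨ IsEvenCycleComp F C
/-- `M` (together with `E_t`) joined to a Turán graph contains `H`:
the defining property of members of the decomposition family `𝓜(H)`
of a graph `H` with chromatic number `r + 1`. -/
def DecompProp {γ δ : Type} (H : SimpleGraph γ) (r : ℕ) (M : SimpleGraph δ) : Prop :=
  ∃ t : ℕ, ContainsCopy H
    (graphJoin (graphDisjUnion M (⊥ : SimpleGraph (Fin t)))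
      (SimpleGraph.turanGraph ((r - 1) * t) (r - 1)))

/-- `M` is a member of the decomposition family `𝓜(H)` (for `H` of chromatic number
`r + 1`): it is minimal with respect to the subgraph relation such that
`H ⊆ (M ∪ E_t) ∇ T_{(r-1)t, r-1}` for some `t`.  (Minimality with respect to the
subgraph relation amounts to edge-minimality together with the absence of isolated
vertices.) -/
def IsMinimalDecomp {γ δ : Type} (H : SimpleGraph γ) (r : ℕ) (M : SimpleGraph δ) : Prop :=
  DecompProp H r M ∧
  (∀ M' : SimpleGraph δ, M' ≤ M → M' ≠ M → ¬ DecompProp H r M') ∧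
  (∀ v : δ, ∃ w : δ, M.Adj v w)

/-- `G` is `𝓜(H)`-free, where `𝓜(H)` is the decomposition family of `H`. -/
def DecompFree {γ : Type} (H : SimpleGraph γ) (r : ℕ) {n : ℕ} (G : SimpleGraph (Fin n)) : Prop :=
  ∀ (m : ℕ) (M : SimpleGraph (Fin m)), IsMinimalDecomp H r M → IsFreeOf M G

/-- `G ∈ EX(n, 𝓜(H))`. -/
def IsExtremalDecompFree {γ : Type} (H : SimpleGraph γ) (r n : ℕ)
    (G : SimpleGraph (Fin n)) : Prop :=
  DecompFree H r G ∧ ∀ G' : SimpleGraph (Fin n), DecompFree H r G' → eCount G' ≤ eCount G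

/-- The vertex type of the graph obtained from `F` by cracking all vertices of `U`:
the old vertices outside `U`, a vertex `u_v` for every pair `(u, v)` with `u ∈ U`
and `v` a neighbour of `u`, and a new vertex `w_{u,v}` for every such pair of
Type II (i.e. with `¬ T (u, v)`). -/
abbrev CrackVert {α : Type} (F : SimpleGraph α) (U : Set α) (T : α × α → Prop) : Type :=
  {a : α // a ∉ U} ⊕
    ({p : α × α // p.1 ∈ U ∧ F.Adj p.1 p.2} ⊕
      {p : α × α // (p.1 ∈ U ∧ F.Adj p.1 p.2) ∧ ¬ T p})

/-- The graph obtained from `F` by cracking all vertices of the independent set `U`,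
where each cracked edge `u v` (`u ∈ U`) is of Type I if `T (u, v)` holds (then `u_v`
is joined to `v`) and of Type II otherwise (then `u_v` is joined to the new vertex
`w_{u,v}`). -/
def crackedGraph {α : Type} (F : SimpleGraph α) (U : Set α) (T : α × α → Prop) :
    SimpleGraph (CrackVert F U T) :=
  SimpleGraph.fromRel (fun x y =>
    match x, y with
    | Sum.inl a, Sum.inl b => F.Adj a.val b.val
    | Sum.inl a, Sum.inr (Sum.inl p) => T p.val ∧ p.val.2 = a.val
    | Sum.inr (Sum.inl p), Sum.inr (Sum.inr q) => p.val = q.val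
    | _, _ => False)

/-- `M` is a member of the cracking family `𝓒(F)`: it is obtained from `F` by
cracking all vertices of some independent set `U` of `F`. -/
def InCrackingFamily {α δ : Type} (F : SimpleGraph α) (M : SimpleGraph δ) : Prop :=
  ∃ (U : Set α) (T : α × α → Prop),
    (∀ u ∈ U, ∀ v ∈ U, ¬ F.Adj u v) ∧ Nonempty (M ≃g crackedGraph F U T)

/-- The matching number of `G` is at most `ν`. -/
def MatchingNumberLE {V : Type} (G : SimpleGraph V) (ν : ℕ) : Prop :=
  ∀ s : Finset (Sym2 V), (∀ e ∈ s, e ∈ G.edgeSet) →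
    (∀ e ∈ s, ∀ e' ∈ s, e ≠ e' → ∀ x : V, x ∈ e → x ∉ e') → s.card ≤ ν

/-- The maximum degree of `G` is at most `Δ`. -/
def MaxDegreeLE {V : Type} (G : SimpleGraph V) (Δ : ℕ) : Prop :=
  ∀ v : V, Nat.card (G.neighborSet v) ≤ Δ

/-- `f(ν, Δ)`: the maximum number of edges of a finite graph with matching number
at most `ν` and maximum degree at most `Δ`. -/
noncomputable def fNuDelta (ν Δ : ℕ) : ℕ :=
  sSup {m | ∃ (k : ℕ) (G : SimpleGraph (Fin k)),
    MatchingNumberLE G ν ∧ MaxDegreeLE G Δ ∧ eCount G = m}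

/-- The number of edges of `G` joining distinct parts of the partition `c`. -/
noncomputable def crossCount {n r : ℕ} (G : SimpleGraph (Fin n)) (c : Fin n → Fin r) : ℕ :=
  Nat.card {e : Sym2 (Fin n) // e ∈ G.edgeSet ∧ ∃ x ∈ e, ∃ y ∈ e, c x ≠ c y}

/-- The number of edges of `G` inside part `i` of the partition `c`. -/
noncomputable def insideCount {n r : ℕ} (G : SimpleGraph (Fin n)) (c : Fin n → Fin r)
    (i : Fin r) : ℕ :=
  Nat.card {e : Sym2 (Fin n) // e ∈ G.edgeSet ∧ ∀ x ∈ e, c x = i}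

/-- `d_{V_i}(w)`: the number of neighbours of `w` in part `i` of the partition `c`. -/
noncomputable def degIn {n r : ℕ} (G : SimpleGraph (Fin n)) (c : Fin n → Fin r)
    (i : Fin r) (w : Fin n) : ℕ :=
  Nat.card {y : Fin n // c y = i ∧ G.Adj w y}

/-- The degree of `v` in `G`. -/
noncomputable def degAll {n : ℕ} (G : SimpleGraph (Fin n)) (v : Fin n) : ℕ :=
  Nat.card (G.neighborSet v)

set_option linter.unusedSectionVars false
set_option maxHeartbeats 1000000

namespace CH

variable {V : Type} [Fintype V] [DecidableEq V]

def DisjE (M : Finset (Sym2 V)) : Prop :=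
  ∀ e ∈ M, ∀ e' ∈ M, e ≠ e' → ∀ x : V, x ∈ e → x ∉ e'

def IsMatch (G : SimpleGraph V) (M : Finset (Sym2 V)) : Prop :=
  (∀ e ∈ M, e ∈ G.edgeSet) ∧ DisjE M

def cov (M : Finset (Sym2 V)) (v : V) : Prop := ∃ e ∈ M, v ∈ e

lemma IsMatch.unique_edge {G : SimpleGraph V} {M : Finset (Sym2 V)} (h : IsMatch G M)
    {e e' : Sym2 V} (he : e ∈ M) (he' : e' ∈ M) {v : V} (hv : v ∈ e) (hv' : v ∈ e') :
    e = e' := by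
  by_contra hne
  exact h.2 e he e' he' hne v hv hv'

lemma IsMatch.partner_unique {G : SimpleGraph V} {M : Finset (Sym2 V)} (h : IsMatch G M)
    {v a b : V} (ha : s(v, a) ∈ M) (hb : s(v, b) ∈ M) : a = b := by
  have := h.unique_edge ha hb (Sym2.mem_mk_left v a) (Sym2.mem_mk_left v b)
  rw [Sym2.congr_right] at this
  exact this

lemma IsMatch.ne_of_mem {G : SimpleGraph V} {M : Finset (Sym2 V)} (h : IsMatch G M)
    {v w : V} (hm : s(v, w) ∈ M) : v ≠ w := by
  intro hvw
  have := h.1 _ hm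
  rw [SimpleGraph.mem_edgeSet] at this
  exact this.ne hvw

section Path

variable {G : SimpleGraph V} {M N : Finset (Sym2 V)} {u : V}

/-- alternating path data -/
def GP (M N : Finset (Sym2 V)) (u : V) (m : ℕ) (x : ℕ → V) : Prop :=
  x 0 = u ∧ (∀ i ≤ m, ∀ j ≤ m, x i = x j → i = j) ∧
  ∀ i < m, s(x i, x (i+1)) ∈ (if Even i then N else M)

lemma GP.edgeN {m : ℕ} {x : ℕ → V} (hp : GP M N u m x) {i : ℕ} (hi : i < m)
    (he : Even i) : s(x i, x (i+1)) ∈ N := by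
  have := hp.2.2 i hi; rwa [if_pos he] at this

lemma GP.edgeM {m : ℕ} {x : ℕ → V} (hp : GP M N u m x) {i : ℕ} (hi : i < m)
    (he : ¬ Even i) : s(x i, x (i+1)) ∈ M := by
  have := hp.2.2 i hi; rwa [if_neg he] at this

lemma GP.partnerN (hN : IsMatch G N) {m : ℕ} {x : ℕ → V} (hp : GP M N u m x)
    {j : ℕ} (hj : j ≤ m) (hjm : Even j → j < m) {y : V} (hy : s(x j, y) ∈ N) :
    (Even j ∧ y = x (j+1)) ∨ (¬ Even j ∧ y = x (j-1)) := by
  by_cases hev : Even j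
  · exact Or.inl ⟨hev, hN.partner_unique hy (hp.edgeN (hjm hev) hev)⟩
  · have hj1 : 0 < j := by
      rcases Nat.eq_zero_or_pos j with h | h
      · exact absurd (h ▸ (⟨0, rfl⟩ : Even (0:ℕ))) hev
      · exact h
    have hev' : Even (j - 1) := by
      rw [Nat.even_iff] at *; omega
    have hlt : j - 1 < m := by omega
    have he := hp.edgeN hlt hev'
    rw [show j - 1 + 1 = j by omega] at he
    rw [Sym2.eq_swap] at he
    exact Or.inr ⟨hev, hN.partner_unique hy he⟩

lemma GP.partnerM (hM : IsMatch G M) (huM : ¬ cov M u) {m : ℕ} {x : ℕ → V}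
    (hp : GP M N u m x) {j : ℕ} (hj : j ≤ m) (hjm : ¬ Even j → j < m) {y : V}
    (hy : s(x j, y) ∈ M) :
    (¬ Even j ∧ y = x (j+1)) ∨ (Even j ∧ 0 < j ∧ y = x (j-1)) := by
  by_cases hev : Even j
  · have hj1 : 0 < j := by
      rcases Nat.eq_zero_or_pos j with h | h
      · subst h
        exfalso
        rw [hp.1] at hy
        exact huM ⟨s(u, y), hy, Sym2.mem_mk_left _ _⟩
      · exact h
    have hev' : ¬ Even (j - 1) := by rw [Nat.even_iff] at *; omega
    have hlt : j - 1 < m := by omega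
    have he := hp.edgeM hlt hev'
    rw [show j - 1 + 1 = j by omega] at he
    rw [Sym2.eq_swap] at he
    exact Or.inr ⟨hev, hj1, hM.partner_unique hy he⟩
  · exact Or.inl ⟨hev, hM.partner_unique hy (hp.edgeM (hjm hev) hev)⟩

/-- extension -/
lemma GP.extend {m : ℕ} {x : ℕ → V} (hp : GP M N u m x) {y : V}
    (hy : ∀ j ≤ m, y ≠ x j)
    (he : s(x m, y) ∈ (if Even m then N else M)) :
    GP M N u (m+1) (Function.update x (m+1) y) := by
  have hx : ∀ i ≤ m, Function.update x (m+1) y i = x i := by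
    intro i hi
    exact Function.update_of_ne (by omega) _ _
  refine ⟨by rw [hx 0 (by omega)]; exact hp.1, ?_, ?_⟩
  · intro i hi j hj hij
    rcases Nat.lt_or_ge i (m+1) with hi' | hi'
    · rcases Nat.lt_or_ge j (m+1) with hj' | hj'
      · rw [hx i (by omega), hx j (by omega)] at hij
        exact hp.2.1 i (by omega) j (by omega) hij
      · have hj2 : j = m + 1 := by omega
        subst hj2
        rw [hx i (by omega), Function.update_self] at hij
        exact absurd hij.symm (hy i (by omega))
    · have hi2 : i = m + 1 := by omega
      subst hi2
      rcases Nat.lt_or_ge j (m+1) with hj' | hj'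
      · rw [hx j (by omega), Function.update_self] at hij
        exact absurd hij (hy j (by omega))
      · omega
  · intro i hi
    rcases Nat.lt_or_ge i m with hi' | hi'
    · rw [hx i (by omega), hx (i+1) (by omega)]
      exact hp.2.2 i hi'
    · have : i = m := by omega
      subst this
      rw [hx i (by omega), Function.update_self]
      exact he

lemma gp_zero : GP M N u 0 (fun _ => u) :=
  ⟨rfl, fun i hi j hj _ => by omega, fun i hi => by omega⟩

lemma GP.bound {m : ℕ} {x : ℕ → V} (hp : GP M N u m x) : m < Fintype.card V := by
  have h : (Finset.range (m+1)).card ≤ (Finset.univ : Finset V).card := by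
    apply Finset.card_le_card_of_injOn x (fun a _ => Finset.mem_univ _)
    intro i hi j hj hij
    simp only [Finset.coe_range, Set.mem_Iio] at hi hj
    exact hp.2.1 i (by omega) j (by omega) hij
  simp only [Finset.card_range, Finset.card_univ] at h
  omega

lemma exists_max_path (hM : IsMatch G M) (hN : IsMatch G N)
    (huM : ¬ cov M u) (huN : cov N u) :
    ∃ m x, GP M N u m x ∧ 1 ≤ m ∧ (Even m → ¬ cov N (x m)) ∧
      (¬ Even m → ¬ cov M (x m)) := by
  set S : Set ℕ := {m | ∃ x, GP M N u m x} with hS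
  have hne : S.Nonempty := ⟨0, _, gp_zero⟩
  have hbdd : BddAbove S := by
    refine ⟨Fintype.card V, ?_⟩
    rintro m ⟨x, hx⟩
    exact le_of_lt hx.bound
  obtain ⟨x, hp⟩ : ∃ x, GP M N u (sSup S) x := Nat.sSup_mem hne hbdd
  set m := sSup S with hm
  have hmax : ¬ ∃ x, GP M N u (m+1) x := by
    intro h
    have : m + 1 ≤ m := le_csSup hbdd h
    omega
  -- fresh vertex lemma
  have fresh : ∀ y, s(x m, y) ∈ (if Even m then N else M) → ∀ j ≤ m, y ≠ x j := by
    intro y hy j hj hyx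
    subst hyx
    by_cases hev : Even m
    · rw [if_pos hev] at hy
      have hne' : x m ≠ x j := hN.ne_of_mem hy
      have hjlt : j < m := by
        rcases Nat.lt_or_ge j m with h | h
        · exact h
        · exfalso; exact hne' (congrArg x (by omega)).symm
      rw [Sym2.eq_swap] at hy
      rcases hp.partnerN hN (by omega) (fun _ => hjlt) hy with ⟨hje, hxe⟩ | ⟨hjo, hxe⟩
      · have := hp.2.1 m (le_refl m) (j+1) (by omega) hxe
        rw [Nat.even_iff] at hev hje; omega
      · have := hp.2.1 m (le_refl m) (j-1) (by omega) hxe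
        omega
    · rw [if_neg hev] at hy
      have hne' : x m ≠ x j := hM.ne_of_mem hy
      have hjlt : j < m := by
        rcases Nat.lt_or_ge j m with h | h
        · exact h
        · exfalso; exact hne' (congrArg x (by omega)).symm
      rw [Sym2.eq_swap] at hy
      rcases hp.partnerM hM huM (by omega) (fun _ => hjlt) hy with ⟨hjo, hxe⟩ | ⟨hje, hj0, hxe⟩
      · have := hp.2.1 m (le_refl m) (j+1) (by omega) hxe
        rw [Nat.even_iff] at hev hjo; omega
      · have := hp.2.1 m (le_refl m) (j-1) (by omega) hxe
        omega
  have hnocov : ∀ y, s(x m, y) ∈ (if Even m then N else M) → False := by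
    intro y hy
    exact hmax ⟨_, hp.extend (fresh y hy) hy⟩
  have hendN : Even m → ¬ cov N (x m) := by
    intro hev ⟨e, he, hxe⟩
    obtain ⟨y, rfl⟩ := Sym2.mem_iff_exists.mp hxe
    exact hnocov y (by rw [if_pos hev]; exact he)
  have hendM : ¬ Even m → ¬ cov M (x m) := by
    intro hev ⟨e, he, hxe⟩
    obtain ⟨y, rfl⟩ := Sym2.mem_iff_exists.mp hxe
    exact hnocov y (by rw [if_neg hev]; exact he)
  have hm1 : 1 ≤ m := by
    by_contra h
    have hm0 : m = 0 := by omega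
    exact hendN (hm0 ▸ (⟨0, rfl⟩ : Even (0:ℕ))) (by rw [hm0, hp.1]; exact huN)
  exact ⟨m, x, hp, hm1, hendN, hendM⟩

end Path
section Swap

variable {G : SimpleGraph V} {M N : Finset (Sym2 V)} {u : V} {m : ℕ} {x : ℕ → V}

def pedge (x : ℕ → V) (i : ℕ) : Sym2 V := s(x i, x (i+1))

def NPa (x : ℕ → V) (m : ℕ) : Finset (Sym2 V) :=
  ((Finset.range m).filter (fun i => Even i)).image (pedge x)

def MPa (x : ℕ → V) (m : ℕ) : Finset (Sym2 V) :=
  ((Finset.range m).filter (fun i => ¬ Even i)).image (pedge x)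

lemma card_even_range (m : ℕ) :
    ((Finset.range m).filter (fun i => Even i)).card = (m+1)/2 := by
  induction m with
  | zero => simp
  | succ m ih =>
    rw [Finset.range_add_one, Finset.filter_insert]
    by_cases h : Even m
    · rw [if_pos h, Finset.card_insert_of_notMem (by simp)]
      rw [Nat.even_iff] at h; omega
    · rw [if_neg h, ih]
      rw [Nat.even_iff] at h; omega

lemma card_odd_range (m : ℕ) :
    ((Finset.range m).filter (fun i => ¬ Even i)).card = m/2 := by
  induction m with
  | zero => simp
  | succ m ih =>
    rw [Finset.range_add_one, Finset.filter_insert]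
    by_cases h : Even m
    · rw [if_neg (by simpa using h), ih]
      rw [Nat.even_iff] at h; omega
    · rw [if_pos h, Finset.card_insert_of_notMem (by simp)]
      rw [Nat.even_iff] at h; omega

lemma mem_pedge {w : V} {i : ℕ} : w ∈ pedge x i ↔ w = x i ∨ w = x (i+1) := by
  simp [pedge, Sym2.mem_iff]

lemma GP.einj (hp : GP M N u m x) {i j : ℕ} (hi : i < m) (hj : j < m)
    (hij : pedge x i = pedge x j) : i = j := by
  rcases Sym2.eq_iff.mp hij with ⟨h1, h2⟩ | ⟨h1, h2⟩
  · exact hp.2.1 i (by omega) j (by omega) h1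
  · have e1 := hp.2.1 i (by omega) (j+1) (by omega) h1
    have e2 := hp.2.1 (i+1) (by omega) j (by omega) h2
    omega

lemma mem_NPa {e : Sym2 V} : e ∈ NPa x m ↔ ∃ i, i < m ∧ Even i ∧ e = pedge x i := by
  simp only [NPa, Finset.mem_image, Finset.mem_filter, Finset.mem_range]
  constructor
  · rintro ⟨i, ⟨h1, h2⟩, rfl⟩; exact ⟨i, h1, h2, rfl⟩
  · rintro ⟨i, h1, h2, rfl⟩; exact ⟨i, ⟨h1, h2⟩, rfl⟩

lemma mem_MPa {e : Sym2 V} : e ∈ MPa x m ↔ ∃ i, i < m ∧ ¬ Even i ∧ e = pedge x i := by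
  simp only [MPa, Finset.mem_image, Finset.mem_filter, Finset.mem_range]
  constructor
  · rintro ⟨i, ⟨h1, h2⟩, rfl⟩; exact ⟨i, h1, h2, rfl⟩
  · rintro ⟨i, h1, h2, rfl⟩; exact ⟨i, ⟨h1, h2⟩, rfl⟩

lemma GP.NPa_sub (hp : GP M N u m x) : NPa x m ⊆ N := by
  intro e he
  obtain ⟨i, hi, hev, rfl⟩ := mem_NPa.mp he
  exact hp.edgeN hi hev

lemma GP.MPa_sub (hp : GP M N u m x) : MPa x m ⊆ M := by
  intro e he
  obtain ⟨i, hi, hev, rfl⟩ := mem_MPa.mp he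
  exact hp.edgeM hi hev

lemma GP.cardNPa (hp : GP M N u m x) : (NPa x m).card = (m+1)/2 := by
  rw [NPa, Finset.card_image_of_injOn, card_even_range]
  intro i hi j hj hij
  simp only [Finset.coe_filter, Finset.mem_range, Set.mem_setOf_eq] at hi hj
  exact hp.einj hi.1 hj.1 hij

lemma GP.cardMPa (hp : GP M N u m x) : (MPa x m).card = m/2 := by
  rw [MPa, Finset.card_image_of_injOn, card_odd_range]
  intro i hi j hj hij
  simp only [Finset.coe_filter, Finset.mem_range, Set.mem_setOf_eq] at hi hj
  exact hp.einj hi.1 hj.1 hij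

/-- M-edges not on the path avoid all path vertices. -/
lemma GP.S2M (hp : GP M N u m x) (hM : IsMatch G M) (huM : ¬ cov M u)
    (hendM : ¬ Even m → ¬ cov M (x m)) :
    ∀ e ∈ M, e ∉ MPa x m → ∀ j ≤ m, x j ∉ e := by
  intro e heM heMP j hj hxj
  by_cases hjm : j = m ∧ ¬ Even m
  · exact hendM hjm.2 ⟨e, heM, hjm.1 ▸ hxj⟩
  · have hjm' : ¬ Even j → j < m := by
      intro ho
      rcases Nat.lt_or_ge j m with h | h
      · exact h
      · have hjm2 : j = m := by omega
        subst hjm2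
        exact absurd ⟨rfl, ho⟩ hjm
    obtain ⟨y, rfl⟩ := Sym2.mem_iff_exists.mp hxj
    rcases hp.partnerM hM huM hj hjm' heM with ⟨hod, rfl⟩ | ⟨hev, hj0, rfl⟩
    · exact heMP (mem_MPa.mpr ⟨j, hjm' hod, hod, rfl⟩)
    · have hod' : ¬ Even (j-1) := by rw [Nat.even_iff] at *; omega
      refine heMP (mem_MPa.mpr ⟨j - 1, by omega, hod', ?_⟩)
      rw [pedge, show j - 1 + 1 = j by omega, Sym2.eq_swap]

lemma GP.S2N (hp : GP M N u m x) (hN : IsMatch G N)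
    (hendN : Even m → ¬ cov N (x m)) :
    ∀ e ∈ N, e ∉ NPa x m → ∀ j ≤ m, x j ∉ e := by
  intro e heN heNP j hj hxj
  by_cases hjm : j = m ∧ Even m
  · exact hendN hjm.2 ⟨e, heN, hjm.1 ▸ hxj⟩
  · have hjm' : Even j → j < m := by
      intro ho
      rcases Nat.lt_or_ge j m with h | h
      · exact h
      · have hjm2 : j = m := by omega
        subst hjm2
        exact absurd ⟨rfl, ho⟩ hjm
    obtain ⟨y, rfl⟩ := Sym2.mem_iff_exists.mp hxj
    rcases hp.partnerN hN hj hjm' heN with ⟨hev, rfl⟩ | ⟨hod, rfl⟩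
    · exact heNP (mem_NPa.mpr ⟨j, hjm' hev, hev, rfl⟩)
    · have hev' : Even (j-1) := by rw [Nat.even_iff] at *; omega
      have hj0 : 0 < j := by
        rcases Nat.eq_zero_or_pos j with h | h
        · exact absurd (h ▸ (⟨0, rfl⟩ : Even (0:ℕ))) hod
        · exact h
      refine heNP (mem_NPa.mpr ⟨j - 1, by omega, hev', ?_⟩)
      rw [pedge, show j - 1 + 1 = j by omega, Sym2.eq_swap]

/-- every path vertex (except possibly `x m` when `m` even) is covered by path N-edges -/
lemma covNP {j : ℕ} (hj : j ≤ m) (hjm : Even j → j < m) :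
    ∃ e ∈ NPa x m, x j ∈ e := by
  by_cases hev : Even j
  · exact ⟨pedge x j, mem_NPa.mpr ⟨j, hjm hev, hev, rfl⟩, mem_pedge.mpr (Or.inl rfl)⟩
  · have hj0 : 0 < j := by
      rcases Nat.eq_zero_or_pos j with h | h
      · exact absurd (h ▸ (⟨0, rfl⟩ : Even (0:ℕ))) hev
      · exact h
    have hev' : Even (j-1) := by rw [Nat.even_iff] at *; omega
    refine ⟨pedge x (j-1), mem_NPa.mpr ⟨j-1, by omega, hev', rfl⟩, ?_⟩
    rw [mem_pedge, show j - 1 + 1 = j by omega]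
    exact Or.inr rfl

lemma covMP {j : ℕ} (hj : j ≤ m) (hj0 : 0 < j) (hjm : ¬ Even j → j < m) :
    ∃ e ∈ MPa x m, x j ∈ e := by
  by_cases hev : Even j
  · have hev' : ¬ Even (j-1) := by rw [Nat.even_iff] at *; omega
    refine ⟨pedge x (j-1), mem_MPa.mpr ⟨j-1, by omega, hev', rfl⟩, ?_⟩
    rw [mem_pedge, show j - 1 + 1 = j by omega]
    exact Or.inr rfl
  · exact ⟨pedge x j, mem_MPa.mpr ⟨j, hjm hev, hev, rfl⟩, mem_pedge.mpr (Or.inl rfl)⟩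

lemma GP.swapM_isMatch (hp : GP M N u m x) (hM : IsMatch G M) (hN : IsMatch G N)
    (huM : ¬ cov M u) (hendM : ¬ Even m → ¬ cov M (x m)) :
    IsMatch G ((M \ MPa x m) ∪ NPa x m) := by
  constructor
  · intro e he
    rcases Finset.mem_union.mp he with h | h
    · exact hM.1 e (Finset.mem_sdiff.mp h).1
    · exact hN.1 e (hp.NPa_sub h)
  · intro e he e' he' hne w hw hw'
    rcases Finset.mem_union.mp he with h | h <;> rcases Finset.mem_union.mp he' with h' | h'
    · exact hM.2 e (Finset.mem_sdiff.mp h).1 e' (Finset.mem_sdiff.mp h').1 hne w hw hw'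
    · obtain ⟨i, hi, _, rfl⟩ := mem_NPa.mp h'
      rcases mem_pedge.mp hw' with rfl | rfl
      · exact hp.S2M hM huM hendM e (Finset.mem_sdiff.mp h).1 (Finset.mem_sdiff.mp h).2
          i (by omega) hw
      · exact hp.S2M hM huM hendM e (Finset.mem_sdiff.mp h).1 (Finset.mem_sdiff.mp h).2
          (i+1) (by omega) hw
    · obtain ⟨i, hi, _, rfl⟩ := mem_NPa.mp h
      rcases mem_pedge.mp hw with rfl | rfl
      · exact absurd hw' (hp.S2M hM huM hendM e' (Finset.mem_sdiff.mp h').1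
          (Finset.mem_sdiff.mp h').2 i (by omega))
      · exact absurd hw' (hp.S2M hM huM hendM e' (Finset.mem_sdiff.mp h').1
          (Finset.mem_sdiff.mp h').2 (i+1) (by omega))
    · exact hN.2 e (hp.NPa_sub h) e' (hp.NPa_sub h') hne w hw hw'

lemma GP.swapN_isMatch (hp : GP M N u m x) (hM : IsMatch G M) (hN : IsMatch G N)
    (hendN : Even m → ¬ cov N (x m)) :
    IsMatch G ((N \ NPa x m) ∪ MPa x m) := by
  constructor
  · intro e he
    rcases Finset.mem_union.mp he with h | h
    · exact hN.1 e (Finset.mem_sdiff.mp h).1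
    · exact hM.1 e (hp.MPa_sub h)
  · intro e he e' he' hne w hw hw'
    rcases Finset.mem_union.mp he with h | h <;> rcases Finset.mem_union.mp he' with h' | h'
    · exact hN.2 e (Finset.mem_sdiff.mp h).1 e' (Finset.mem_sdiff.mp h').1 hne w hw hw'
    · obtain ⟨i, hi, _, rfl⟩ := mem_MPa.mp h'
      rcases mem_pedge.mp hw' with rfl | rfl
      · exact hp.S2N hN hendN e (Finset.mem_sdiff.mp h).1 (Finset.mem_sdiff.mp h).2
          i (by omega) hw
      · exact hp.S2N hN hendN e (Finset.mem_sdiff.mp h).1 (Finset.mem_sdiff.mp h).2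
          (i+1) (by omega) hw
    · obtain ⟨i, hi, _, rfl⟩ := mem_MPa.mp h
      rcases mem_pedge.mp hw with rfl | rfl
      · exact absurd hw' (hp.S2N hN hendN e' (Finset.mem_sdiff.mp h').1
          (Finset.mem_sdiff.mp h').2 i (by omega))
      · exact absurd hw' (hp.S2N hN hendN e' (Finset.mem_sdiff.mp h').1
          (Finset.mem_sdiff.mp h').2 (i+1) (by omega))
    · exact hM.2 e (hp.MPa_sub h) e' (hp.MPa_sub h') hne w hw hw'

lemma GP.swapM_card (hp : GP M N u m x) (hM : IsMatch G M) (hN : IsMatch G N)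
    (huM : ¬ cov M u) (hendM : ¬ Even m → ¬ cov M (x m)) :
    ((M \ MPa x m) ∪ NPa x m).card = M.card - m/2 + (m+1)/2 := by
  have hdisj : Disjoint (M \ MPa x m) (NPa x m) := by
    rw [Finset.disjoint_left]
    intro e he he'
    obtain ⟨i, hi, _, hei⟩ := mem_NPa.mp he'
    exact hp.S2M hM huM hendM e (Finset.mem_sdiff.mp he).1 (Finset.mem_sdiff.mp he).2
      i (by omega) (by rw [hei]; exact mem_pedge.mpr (Or.inl rfl))
  rw [Finset.card_union_of_disjoint hdisj, Finset.card_sdiff_of_subset hp.MPa_sub,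
    hp.cardMPa, hp.cardNPa]

lemma GP.swapN_card (hp : GP M N u m x) (hM : IsMatch G M) (hN : IsMatch G N)
    (hendN : Even m → ¬ cov N (x m)) :
    ((N \ NPa x m) ∪ MPa x m).card = N.card - (m+1)/2 + m/2 := by
  have hdisj : Disjoint (N \ NPa x m) (MPa x m) := by
    rw [Finset.disjoint_left]
    intro e he he'
    obtain ⟨i, hi, _, hei⟩ := mem_MPa.mp he'
    exact hp.S2N hN hendN e (Finset.mem_sdiff.mp he).1 (Finset.mem_sdiff.mp he).2
      i (by omega) (by rw [hei]; exact mem_pedge.mpr (Or.inl rfl))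
  rw [Finset.card_union_of_disjoint hdisj, Finset.card_sdiff_of_subset hp.NPa_sub,
    hp.cardNPa, hp.cardMPa]

lemma alt {G : SimpleGraph V} {M N : Finset (Sym2 V)} {u : V}
    (hM : IsMatch G M) (hN : IsMatch G N) (huM : ¬ cov M u) (huN : cov N u) :
    (∃ M₁ : Finset (Sym2 V), IsMatch G M₁ ∧ M₁.card = M.card + 1) ∨
    ∃ (z : V) (M' N' : Finset (Sym2 V)), z ≠ u ∧ cov M z ∧ ¬ cov N z ∧
      IsMatch G M' ∧ IsMatch G N' ∧ M'.card = M.card ∧ N'.card = N.card ∧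
      (∀ w, cov M' w ↔ (w = u ∨ (cov M w ∧ w ≠ z))) ∧
      (∀ w, cov N' w ↔ (w = z ∨ (cov N w ∧ w ≠ u))) := by
  obtain ⟨m, x, hp, hm1, hendN, hendM⟩ := exists_max_path hM hN huM huN
  have hMPle : m/2 ≤ M.card := by
    have := Finset.card_le_card hp.MPa_sub
    rw [hp.cardMPa] at this; exact this
  by_cases hev : Even m
  case neg =>
    -- m odd : augmenting path, bigger matching
    left
    refine ⟨(M \ MPa x m) ∪ NPa x m, hp.swapM_isMatch hM hN huM hendM, ?_⟩
    rw [hp.swapM_card hM hN huM hendM]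
    rw [Nat.even_iff] at hev
    omega
  case pos =>
    right
    have hm2 : 2 ≤ m := by rw [Nat.even_iff] at hev; omega
    have hinj : ∀ i ≤ m, ∀ j ≤ m, x i = x j → i = j := hp.2.1
    have hxmu : x m ≠ u := by
      rw [← hp.1]
      intro h
      have := hinj m le_rfl 0 (by omega) h
      omega
    have hmo : ¬ Even (m-1) := by rw [Nat.even_iff] at *; omega
    have hxm_edge : pedge x (m-1) ∈ MPa x m := mem_MPa.mpr ⟨m-1, by omega, hmo, rfl⟩
    have hxm_mem : x m ∈ pedge x (m-1) := by
      rw [mem_pedge, show m - 1 + 1 = m by omega]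
      exact Or.inr rfl
    have hcovMz : cov M (x m) := ⟨pedge x (m-1), hp.MPa_sub hxm_edge, hxm_mem⟩
    refine ⟨x m, (M \ MPa x m) ∪ NPa x m, (N \ NPa x m) ∪ MPa x m,
      hxmu, hcovMz, hendN hev,
      hp.swapM_isMatch hM hN huM hendM, hp.swapN_isMatch hM hN hendN, ?_, ?_, ?_, ?_⟩
    · rw [hp.swapM_card hM hN huM hendM]
      rw [Nat.even_iff] at hev; omega
    · rw [hp.swapN_card hM hN hendN]
      have hNPle : (m+1)/2 ≤ N.card := by
        have := Finset.card_le_card hp.NPa_sub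
        rw [hp.cardNPa] at this; exact this
      rw [Nat.even_iff] at hev; omega
    · -- covered set of M'
      intro w
      constructor
      · rintro ⟨e, he, hw⟩
        rcases Finset.mem_union.mp he with h | h
        · right
          refine ⟨⟨e, (Finset.mem_sdiff.mp h).1, hw⟩, ?_⟩
          intro hwm; subst hwm
          exact hp.S2M hM huM hendM e (Finset.mem_sdiff.mp h).1 (Finset.mem_sdiff.mp h).2
            m le_rfl hw
        · obtain ⟨i, hi, hie, hei⟩ := mem_NPa.mp h
          subst hei
          rcases mem_pedge.mp hw with rfl | rfl
          · by_cases hi0 : i = 0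
            · left; subst hi0; exact hp.1
            · right
              obtain ⟨e', he', hwe⟩ := covMP (x := x) (m := m) (j := i) (le_of_lt hi)
                (by omega) (fun _ => hi)
              refine ⟨⟨e', hp.MPa_sub he', hwe⟩, ?_⟩
              intro h'
              have := hinj i (by omega) m le_rfl h'
              omega
          · right
            have hne : i + 1 ≠ m := by rw [Nat.even_iff] at hie hev; omega
            obtain ⟨e', he', hwe⟩ := covMP (x := x) (m := m) (j := i+1) (by omega)
              (by omega) (fun _ => by omega)
            refine ⟨⟨e', hp.MPa_sub he', hwe⟩, ?_⟩
            intro h'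
            have := hinj (i+1) (by omega) m le_rfl h'
            omega
      · rintro (rfl | ⟨⟨e, he, hw⟩, hne⟩)
        · have h0 : pedge x 0 ∈ NPa x m := mem_NPa.mpr ⟨0, by omega, (⟨0, rfl⟩ : Even (0:ℕ)), rfl⟩
          have : x 0 ∈ pedge x 0 := mem_pedge.mpr (Or.inl rfl)
          rw [hp.1] at this
          exact ⟨pedge x 0, Finset.mem_union_right _ h0, this⟩
        · by_cases hMP : e ∈ MPa x m
          · obtain ⟨i, hi, hio, hei⟩ := mem_MPa.mp hMP
            subst hei
            rcases mem_pedge.mp hw with rfl | rfl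
            · obtain ⟨e', he', hwe⟩ := covNP (x := x) (m := m) (j := i) (le_of_lt hi)
                (fun _ => hi)
              exact ⟨e', Finset.mem_union_right _ he', hwe⟩
            · have hne' : i + 1 ≠ m := fun h => hne (congrArg x h)
              obtain ⟨e', he', hwe⟩ := covNP (x := x) (m := m) (j := i+1) (by omega)
                (fun _ => by omega)
              exact ⟨e', Finset.mem_union_right _ he', hwe⟩
          · exact ⟨e, Finset.mem_union_left _ (Finset.mem_sdiff.mpr ⟨he, hMP⟩), hw⟩
    · -- covered set of N'
      intro w
      constructor
      · rintro ⟨e, he, hw⟩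
        rcases Finset.mem_union.mp he with h | h
        · right
          refine ⟨⟨e, (Finset.mem_sdiff.mp h).1, hw⟩, ?_⟩
          intro hwu; subst hwu
          refine hp.S2N hN hendN e (Finset.mem_sdiff.mp h).1 (Finset.mem_sdiff.mp h).2
            0 (by omega) ?_
          rw [hp.1]; exact hw
        · obtain ⟨i, hi, hio, hei⟩ := mem_MPa.mp h
          subst hei
          rcases mem_pedge.mp hw with rfl | rfl
          · right
            obtain ⟨e', he', hwe⟩ := covNP (x := x) (m := m) (j := i) (le_of_lt hi)
              (fun h' => absurd h' hio)
            refine ⟨⟨e', hp.NPa_sub he', hwe⟩, ?_⟩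
            rw [← hp.1]
            intro h'
            have hi0 : 0 < i := by
              rcases Nat.eq_zero_or_pos i with h0 | h0
              · exact absurd (h0 ▸ (⟨0, rfl⟩ : Even (0:ℕ))) hio
              · exact h0
            have := hinj i (by omega) 0 (by omega) h'
            omega
          · by_cases him : i + 1 = m
            · left; rw [him]
            · right
              obtain ⟨e', he', hwe⟩ := covNP (x := x) (m := m) (j := i+1) (by omega)
                (fun _ => by omega)
              refine ⟨⟨e', hp.NPa_sub he', hwe⟩, ?_⟩
              rw [← hp.1]
              intro h'
              have := hinj (i+1) (by omega) 0 (by omega) h'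
              omega
      · rintro (rfl | ⟨⟨e, he, hw⟩, hne⟩)
        · exact ⟨pedge x (m-1), Finset.mem_union_right _ hxm_edge, hxm_mem⟩
        · by_cases hNP : e ∈ NPa x m
          · obtain ⟨i, hi, hie, hei⟩ := mem_NPa.mp hNP
            subst hei
            rcases mem_pedge.mp hw with rfl | rfl
            · have hi0 : 0 < i := by
                rcases Nat.eq_zero_or_pos i with h0 | h0
                · subst h0; exact absurd hp.1 hne
                · exact h0
              obtain ⟨e', he', hwe⟩ := covMP (x := x) (m := m) (j := i) (le_of_lt hi)
                hi0 (fun h' => absurd hie h')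
              exact ⟨e', Finset.mem_union_right _ he', hwe⟩
            · have hne' : i + 1 ≠ m := by rw [Nat.even_iff] at hie hev; omega
              obtain ⟨e', he', hwe⟩ := covMP (x := x) (m := m) (j := i+1) (by omega)
                (by omega) (fun _ => by omega)
              exact ⟨e', Finset.mem_union_right _ he', hwe⟩
          · exact ⟨e, Finset.mem_union_left _ (Finset.mem_sdiff.mpr ⟨he, hNP⟩), hw⟩

end Swap

/-- matching number -/
noncomputable def mnum (G : SimpleGraph V) : ℕ :=
  sSup {m | ∃ M : Finset (Sym2 V), IsMatch G M ∧ M.card = m}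

lemma mnum_bddAbove (G : SimpleGraph V) :
    BddAbove {m | ∃ M : Finset (Sym2 V), IsMatch G M ∧ M.card = m} := by
  classical
  refine ⟨Fintype.card (Sym2 V), ?_⟩
  rintro m ⟨M, _, rfl⟩
  exact Finset.card_le_card (Finset.subset_univ M) |>.trans (le_of_eq (Finset.card_univ))

lemma empty_isMatch (G : SimpleGraph V) : IsMatch G (∅ : Finset (Sym2 V)) := by
  constructor
  · intro e he; simp at he
  · intro e he; simp at he

lemma le_mnum {G : SimpleGraph V} {M : Finset (Sym2 V)} (h : IsMatch G M) :
    M.card ≤ mnum G :=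
  le_csSup (mnum_bddAbove G) ⟨M, h, rfl⟩

lemma mnum_spec (G : SimpleGraph V) :
    ∃ M : Finset (Sym2 V), IsMatch G M ∧ M.card = mnum G := by
  have := Nat.sSup_mem (s := {m | ∃ M : Finset (Sym2 V), IsMatch G M ∧ M.card = m})
    ⟨0, ∅, empty_isMatch G, Finset.card_empty⟩ (mnum_bddAbove G)
  exact this

lemma mnum_le_iff {G : SimpleGraph V} {k : ℕ} :
    mnum G ≤ k ↔ ∀ M : Finset (Sym2 V), IsMatch G M → M.card ≤ k := by
  constructor
  · intro h M hM; exact (le_mnum hM).trans h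
  · intro h
    obtain ⟨M, hM, hc⟩ := mnum_spec G
    rw [← hc]; exact h M hM

lemma mnum_mono {G G' : SimpleGraph V} (h : G ≤ G') : mnum G ≤ mnum G' := by
  rw [mnum_le_iff]
  intro M hM
  exact le_mnum ⟨fun e he => SimpleGraph.edgeSet_mono h (hM.1 e he), hM.2⟩

section Gallai

variable {G : SimpleGraph V} {M : Finset (Sym2 V)}

lemma cov_mem_support (hM : IsMatch G M) {z : V} (h : cov M z) : z ∈ G.support := by
  obtain ⟨e, he, hz⟩ := h
  obtain ⟨y, rfl⟩ := Sym2.mem_iff_exists.mp hz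
  exact ⟨y, (SimpleGraph.mem_edgeSet G).mp (hM.1 _ he)⟩

open scoped Classical in
lemma covF_card (hM : IsMatch G M) :
    (Finset.univ.filter fun v : V => cov M v).card ≤ 2 * M.card := by
  classical
  have hsub : (Finset.univ.filter fun v : V => cov M v) ⊆
      M.biUnion (fun e => Finset.univ.filter (· ∈ e)) := by
    intro v hv
    obtain ⟨e, he, hve⟩ := (Finset.mem_filter.mp hv).2
    exact Finset.mem_biUnion.mpr ⟨e, he, Finset.mem_filter.mpr ⟨Finset.mem_univ _, hve⟩⟩
  calc (Finset.univ.filter fun v : V => cov M v).card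
      ≤ (M.biUnion (fun e => Finset.univ.filter (· ∈ e))).card := Finset.card_le_card hsub
    _ ≤ ∑ e ∈ M, (Finset.univ.filter (· ∈ e)).card := Finset.card_biUnion_le
    _ ≤ ∑ _e ∈ M, 2 := by
        apply Finset.sum_le_sum
        intro e _
        induction e using Sym2.ind with
        | _ a b =>
          have : (Finset.univ.filter (· ∈ s(a, b))) ⊆ {a, b} := by
            intro w hw
            have := (Finset.mem_filter.mp hw).2
            rw [Sym2.mem_iff] at this
            simpa using this
          have h2 : ({a, b} : Finset V).card ≤ 2 :=
            (Finset.card_insert_le a {b}).trans (by simp)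
          exact (Finset.card_le_card this).trans h2
    _ = 2 * M.card := by rw [Finset.sum_const, smul_eq_mul, mul_comm]

lemma insert_match {u v : V} (hM : IsMatch G M) (hadj : G.Adj u v)
    (hu : ¬ cov M u) (hv : ¬ cov M v) : IsMatch G (insert s(u, v) M) ∧
    (insert s(u, v) M).card = M.card + 1 := by
  have hnotmem : s(u, v) ∉ M := fun h => hu ⟨_, h, Sym2.mem_mk_left _ _⟩
  refine ⟨⟨?_, ?_⟩, by rw [Finset.card_insert_of_notMem hnotmem]⟩
  · intro e he
    rcases Finset.mem_insert.mp he with rfl | he'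
    · exact hadj
    · exact hM.1 e he'
  · intro e he e' he' hne w hw hw'
    rcases Finset.mem_insert.mp he with rfl | he2 <;>
      rcases Finset.mem_insert.mp he' with rfl | he2'
    · exact hne rfl
    · rcases Sym2.mem_iff.mp hw with rfl | rfl
      · exact hu ⟨e', he2', hw'⟩
      · exact hv ⟨e', he2', hw'⟩
    · rcases Sym2.mem_iff.mp hw' with rfl | rfl
      · exact hu ⟨e, he2, hw⟩
      · exact hv ⟨e, he2, hw⟩
    · exact hM.2 e he2 e' he2' hne w hw hw'

open scoped Classical in
lemma gallai {G : SimpleGraph V}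
    (hconn : ∀ u v, u ∈ G.support → v ∈ G.support → G.Reachable u v)
    (hiness : ∀ t : V, ∃ N : Finset (Sym2 V), IsMatch G N ∧ N.card = mnum G ∧ ¬ cov N t) :
    (Finset.univ.filter (fun v : V => v ∈ G.support)).card ≤ 2 * mnum G + 1 := by
  classical
  by_cases htwo : ∃ (M : Finset (Sym2 V)) (u v : V), IsMatch G M ∧ M.card = mnum G ∧
      u ∈ G.support ∧ v ∈ G.support ∧ u ≠ v ∧ ¬ cov M u ∧ ¬ cov M v
  case neg =>
    obtain ⟨M₀, hM₀, hc₀⟩ := mnum_spec G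
    have hsub : (Finset.univ.filter (fun v : V => v ∈ G.support)) ⊆
        (Finset.univ.filter fun v : V => cov M₀ v) ∪
        (Finset.univ.filter fun v : V => v ∈ G.support ∧ ¬ cov M₀ v) := by
      intro v hv
      rw [Finset.mem_union, Finset.mem_filter, Finset.mem_filter]
      by_cases h : cov M₀ v
      · exact Or.inl ⟨Finset.mem_univ _, h⟩
      · exact Or.inr ⟨Finset.mem_univ _, (Finset.mem_filter.mp hv).2, h⟩
    have hone : (Finset.univ.filter fun v : V => v ∈ G.support ∧ ¬ cov M₀ v).card ≤ 1 := by
      rw [Finset.card_le_one]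
      intro a ha b hb
      rw [Finset.mem_filter] at ha hb
      by_contra hab
      exact htwo ⟨M₀, a, b, hM₀, hc₀, ha.2.1, hb.2.1, hab, ha.2.2, hb.2.2⟩
    calc (Finset.univ.filter (fun v : V => v ∈ G.support)).card
        ≤ _ := Finset.card_le_card hsub
      _ ≤ (Finset.univ.filter fun v : V => cov M₀ v).card +
          (Finset.univ.filter fun v : V => v ∈ G.support ∧ ¬ cov M₀ v).card :=
            Finset.card_union_le _ _
      _ ≤ 2 * mnum G + 1 := by
          have := covF_card hM₀
          rw [hc₀] at this
          omega
  case pos =>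
    exfalso
    set D : Set ℕ := {d | ∃ (M : Finset (Sym2 V)) (u v : V), IsMatch G M ∧
      M.card = mnum G ∧ u ∈ G.support ∧ v ∈ G.support ∧ u ≠ v ∧ ¬ cov M u ∧ ¬ cov M v ∧
      G.dist u v = d} with hD
    have hDne : D.Nonempty := by
      obtain ⟨M, u, v, h1, h2, h3, h4, h5, h6, h7⟩ := htwo
      exact ⟨G.dist u v, M, u, v, h1, h2, h3, h4, h5, h6, h7, rfl⟩
    obtain ⟨M, u, v, hM, hMc, husupp, hvsupp, huv, huM, hvM⟩ :
        ∃ (M : Finset (Sym2 V)) (u v : V), _ := Nat.sInf_mem hDne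
    obtain ⟨hvM, hdist⟩ := hvM
    set d := sInf D with hd
    have hmin : ∀ d' ∈ D, d ≤ d' := fun d' h => Nat.sInf_le h
    have hreach : G.Reachable u v := hconn u v husupp hvsupp
    have hd0 : d ≠ 0 := by
      intro h
      rw [h] at hdist
      rcases SimpleGraph.dist_eq_zero_iff_eq_or_not_reachable.mp hdist with h' | h'
      · exact huv h'
      · exact h' hreach
    have hd1 : d ≠ 1 := by
      intro h
      rw [h] at hdist
      have hadj : G.Adj u v := SimpleGraph.dist_eq_one_iff_adj.mp hdist
      obtain ⟨hm1, hc1⟩ := insert_match hM hadj huM hvM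
      have := le_mnum hm1
      rw [hc1, hMc] at this
      omega
    have hd2 : 2 ≤ d := by omega
    obtain ⟨p, hp⟩ := hreach.exists_walk_length_eq_dist
    rw [hdist] at hp
    cases p with
    | nil => rw [SimpleGraph.Walk.length_nil] at hp; omega
    | @cons _ t _ hadj q =>
      rw [SimpleGraph.Walk.length_cons] at hp
      have htsupp : t ∈ G.support := ⟨u, hadj.symm⟩
      have htu : t ≠ u := hadj.ne'
      have hdut : G.dist u t ≤ 1 := by
        have := SimpleGraph.dist_le (SimpleGraph.Walk.cons hadj SimpleGraph.Walk.nil)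
        simpa using this
      have hdtv : G.dist t v ≤ d - 1 := by
        have := SimpleGraph.dist_le q
        omega
      have htv : t ≠ v := by
        intro h
        subst h
        have : G.dist u t ≤ 1 := hdut
        have := hconn u t husupp htsupp
        rw [hdist] at *
        omega
      obtain ⟨N, hN, hNc, hNt⟩ := hiness t
      have hNu : cov N u := by
        by_contra hNu
        have : G.dist u t ∈ D := ⟨N, u, t, hN, hNc, husupp, htsupp, Ne.symm htu, hNu, hNt, rfl⟩
        have := hmin _ this
        omega
      rcases alt hM hN huM hNu with ⟨M₁, hM₁, hc₁⟩ | ⟨z, M', N', hzu, hzM, hzN, hM', hN',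
          hcM', hcN', hcovM', hcovN'⟩
      · have := le_mnum hM₁
        rw [hc₁, hMc] at this
        omega
      · have hzsupp : z ∈ G.support := cov_mem_support hM hzM
        by_cases hzt : z = t
        · subst hzt
          have hMt' : ¬ cov M' z := by
            rw [hcovM']
            rintro (rfl | ⟨_, h⟩)
            · exact htu rfl
            · exact h rfl
          have hMv' : ¬ cov M' v := by
            rw [hcovM']
            rintro (rfl | ⟨h, _⟩)
            · exact huv rfl
            · exact hvM h
          have : G.dist z v ∈ D := ⟨M', z, v, hM', by rw [hcM', hMc], hzsupp, hvsupp,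
            htv, hMt', hMv', rfl⟩
          have := hmin _ this
          omega
        · have hNu' : ¬ cov N' u := by
            rw [hcovN']
            rintro (rfl | ⟨_, h⟩)
            · exact hzu rfl
            · exact h rfl
          have hNt' : ¬ cov N' t := by
            rw [hcovN']
            rintro (rfl | ⟨h, _⟩)
            · exact hzt rfl
            · exact hNt h
          have : G.dist u t ∈ D := ⟨N', u, t, hN', by rw [hcN', hNc], husupp, htsupp,
            Ne.symm htu, hNu', hNt', rfl⟩
          have := hmin _ this
          omega

end Gallai

section Main

variable {G : SimpleGraph V}

/-- delete all edges at `v` -/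
def delV (G : SimpleGraph V) (v : V) : SimpleGraph V where
  Adj a b := G.Adj a b ∧ a ≠ v ∧ b ≠ v
  symm := ⟨fun a b h => ⟨h.1.symm, h.2.2, h.2.1⟩⟩
  loopless := ⟨fun a h => G.loopless.irrefl a h.1⟩

/-- restrict to edges inside `S` -/
def restr (G : SimpleGraph V) (S : Set V) : SimpleGraph V where
  Adj a b := G.Adj a b ∧ a ∈ S ∧ b ∈ S
  symm := ⟨fun a b h => ⟨h.1.symm, h.2.2, h.2.1⟩⟩
  loopless := ⟨fun a h => G.loopless.irrefl a h.1⟩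

lemma delV_le {v : V} : delV G v ≤ G := fun a b h => h.1

lemma restr_le {S : Set V} : restr G S ≤ G := fun a b h => h.1

lemma singleton_isMatch {e : Sym2 V} (he : e ∈ G.edgeSet) : IsMatch G {e} := by
  constructor
  · intro e' he'
    rw [Finset.mem_singleton] at he'
    subst he'; exact he
  · intro e1 h1 e2 h2 hne
    rw [Finset.mem_singleton] at h1 h2
    subst h1; subst h2; exact absurd rfl hne

lemma mnum_pos {e : Sym2 V} (he : e ∈ G.edgeSet) : 1 ≤ mnum G := by
  have := le_mnum (singleton_isMatch he)
  simpa using this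

lemma ecard_le_ecard {G' : SimpleGraph V} (h : G' ≤ G) :
    Nat.card G'.edgeSet ≤ Nat.card G.edgeSet := by
  rw [Nat.card_coe_set_eq, Nat.card_coe_set_eq]
  exact Set.ncard_le_ncard (SimpleGraph.edgeSet_mono h) (Set.toFinite _)

lemma ecard_delV (v : V) (hdeg : Nat.card (G.neighborSet v) ≤ ℓ) :
    Nat.card G.edgeSet ≤ Nat.card (delV G v).edgeSet + ℓ := by
  classical
  have hsub : G.edgeSet ⊆ (delV G v).edgeSet ∪ {e | e ∈ G.edgeSet ∧ v ∈ e} := by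
    intro e he
    induction e using Sym2.ind with
    | _ a b =>
      by_cases hv : v = a ∨ v = b
      · exact Or.inr ⟨he, Sym2.mem_iff.mpr hv⟩
      · push_neg at hv
        exact Or.inl (by
          rw [SimpleGraph.mem_edgeSet] at he ⊢
          exact ⟨he, Ne.symm hv.1, Ne.symm hv.2⟩)
  have hinc : {e | e ∈ G.edgeSet ∧ v ∈ e}.ncard ≤ Nat.card (G.neighborSet v) := by
    rw [Nat.card_coe_set_eq]
    refine Set.ncard_le_ncard_of_injOn (fun e => if h : v ∈ e then Sym2.Mem.other' h else v)
      ?_ ?_ (Set.toFinite _)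
    · rintro e ⟨he, hv⟩
      simp only [dif_pos hv]
      have := Sym2.other_spec' hv
      rw [← this] at he
      exact he
    · rintro e ⟨he, hv⟩ e' ⟨he', hv'⟩ heq
      simp only [dif_pos hv, dif_pos hv'] at heq
      have h1 := Sym2.other_spec' hv
      have h2 := Sym2.other_spec' hv'
      rw [← h1, ← h2]
      rw [heq]
  calc Nat.card G.edgeSet
      = G.edgeSet.ncard := Nat.card_coe_set_eq _
    _ ≤ ((delV G v).edgeSet ∪ {e | e ∈ G.edgeSet ∧ v ∈ e}).ncard :=
        Set.ncard_le_ncard hsub (Set.toFinite _)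
    _ ≤ (delV G v).edgeSet.ncard + {e | e ∈ G.edgeSet ∧ v ∈ e}.ncard :=
        Set.ncard_union_le _ _
    _ ≤ Nat.card (delV G v).edgeSet + ℓ := by
        rw [← Nat.card_coe_set_eq]
        omega

lemma restr_edge_mem {S : Set V} {e : Sym2 V} (he : e ∈ (restr G S).edgeSet) :
    ∀ x ∈ e, x ∈ S := by
  induction e using Sym2.ind with
  | _ a b =>
    rw [SimpleGraph.mem_edgeSet] at he
    intro x hx
    rcases Sym2.mem_iff.mp hx with rfl | rfl
    · exact he.2.1
    · exact he.2.2

lemma neighbor_card_le {G' : SimpleGraph V} (h : G' ≤ G) (v : V) :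
    Nat.card (G'.neighborSet v) ≤ Nat.card (G.neighborSet v) := by
  rw [Nat.card_coe_set_eq, Nat.card_coe_set_eq]
  exact Set.ncard_le_ncard (fun w hw => h hw) (Set.toFinite _)

open scoped Classical in
lemma two_ecard_le_supp :
    2 * Nat.card G.edgeSet ≤
      (Finset.univ.filter (fun v : V => v ∈ G.support)).card *
      ((Finset.univ.filter (fun v : V => v ∈ G.support)).card - 1) := by
  classical
  haveI : DecidableRel G.Adj := Classical.decRel _
  set sF := Finset.univ.filter (fun v : V => v ∈ G.support) with hsF
  have he : Nat.card G.edgeSet = G.edgeFinset.card := by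
    rw [Nat.card_eq_fintype_card, SimpleGraph.edgeFinset_card]
  rw [he, ← SimpleGraph.sum_degrees_eq_twice_card_edges]
  have hz : ∀ v ∈ Finset.univ.filter (fun v : V => ¬ v ∈ G.support), G.degree v = 0 := by
    intro v hv
    rw [Finset.mem_filter] at hv
    rw [← SimpleGraph.card_neighborFinset_eq_degree]
    rw [Finset.card_eq_zero]
    ext w
    simp only [SimpleGraph.mem_neighborFinset, Finset.notMem_empty, iff_false]
    intro h
    exact hv.2 ⟨w, h⟩
  have hsplit : ∑ v : V, G.degree v = ∑ v ∈ sF, G.degree v := by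
    rw [← Finset.sum_filter_add_sum_filter_not Finset.univ (fun v : V => v ∈ G.support)]
    rw [Finset.sum_congr rfl hz, Finset.sum_const, smul_eq_mul, mul_zero, add_zero]
  rw [hsplit]
  have hdeg : ∀ v ∈ sF, G.degree v ≤ sF.card - 1 := by
    intro v hv
    rw [← SimpleGraph.card_neighborFinset_eq_degree]
    have hsub : G.neighborFinset v ⊆ sF.erase v := by
      intro w hw
      rw [SimpleGraph.mem_neighborFinset] at hw
      rw [Finset.mem_erase]
      exact ⟨hw.ne', Finset.mem_filter.mpr ⟨Finset.mem_univ _, ⟨v, hw.symm⟩⟩⟩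
    calc (G.neighborFinset v).card ≤ (sF.erase v).card := Finset.card_le_card hsub
      _ = sF.card - 1 := Finset.card_erase_of_mem (Finset.mem_filter.mp hv |>.2 |> fun h =>
          Finset.mem_filter.mpr ⟨Finset.mem_univ _, h⟩)
  calc ∑ v ∈ sF, G.degree v ≤ ∑ _v ∈ sF, (sF.card - 1) := Finset.sum_le_sum hdeg
    _ = sF.card * (sF.card - 1) := by rw [Finset.sum_const, smul_eq_mul]
    _ ≤ _ := by rw [hsF]; exact le_of_eq (by congr)

/-- The main upper bound, by strong induction on `k + e(G)`. -/
lemma upper : ∀ (meas : ℕ) (G : SimpleGraph V) (k Δ : ℕ),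
    k + Nat.card G.edgeSet ≤ meas → mnum G ≤ k → 2 * k + 1 ≤ Δ →
    (∀ v : V, Nat.card (G.neighborSet v) ≤ Δ) →
    Nat.card G.edgeSet ≤ k * Δ := by
  intro meas
  induction meas using Nat.strong_induction_on with
  | _ meas ih =>
    intro G k Δ hmeas hk hΔ hdeg
    classical
    rcases Nat.lt_or_ge (mnum G) k with hlt | hge
    · -- reduce to k = mnum G
      have := ih (mnum G + Nat.card G.edgeSet) (by omega) G (mnum G) Δ le_rfl le_rfl
        (by omega) hdeg
      exact this.trans (Nat.mul_le_mul_right _ (by omega))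
    have hkeq : mnum G = k := le_antisymm hk hge
    rcases Nat.eq_zero_or_pos k with rfl | hkpos
    · -- no edges
      have : G.edgeSet = ∅ := by
        by_contra h
        obtain ⟨e, he⟩ := Set.nonempty_iff_ne_empty.mpr h
        have := mnum_pos he
        omega
      rw [this]
      simp
    by_cases hess : ∃ v : V, ∀ M : Finset (Sym2 V), IsMatch G M → M.card = k → cov M v
    · -- Case A: essential vertex
      obtain ⟨v, hv⟩ := hess
      set G' := delV G v with hG'
      have hm' : mnum G' ≤ k - 1 := by
        rw [mnum_le_iff]
        intro M hM
        have hMG : IsMatch G M := ⟨fun e he => SimpleGraph.edgeSet_mono delV_le (hM.1 e he), hM.2⟩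
        have hle : M.card ≤ k := by rw [← hkeq]; exact le_mnum hMG
        rcases Nat.lt_or_ge M.card k with h | h
        · omega
        · exfalso
          have hcard : M.card = k := by omega
          obtain ⟨e, he, hve⟩ := hv M hMG hcard
          have := hM.1 e he
          obtain ⟨y, rfl⟩ := Sym2.mem_iff_exists.mp hve
          rw [SimpleGraph.mem_edgeSet] at this
          exact this.2.1 rfl
      have hsplit := ecard_delV (G := G) v (hdeg v)
      have hdeg' : ∀ w : V, Nat.card (G'.neighborSet w) ≤ Δ :=
        fun w => (neighbor_card_le delV_le w).trans (hdeg w)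
      have hsub : Nat.card G'.edgeSet ≤ Nat.card G.edgeSet := ecard_le_ecard delV_le
      have hIH := ih ((k-1) + Nat.card G'.edgeSet) (by omega) G' (k-1) Δ le_rfl hm'
        (by omega) hdeg'
      have hk1 : k - 1 + 1 = k := by omega
      have hmul : (k-1) * Δ + Δ = k * Δ := by
        conv_rhs => rw [← hk1]
        rw [Nat.succ_mul]
      calc Nat.card G.edgeSet ≤ Nat.card G'.edgeSet + Δ := hsplit
        _ ≤ (k-1) * Δ + Δ := Nat.add_le_add_right hIH Δ
        _ = k * Δ := hmul
    · push_neg at hess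
      have hess' : ∀ v : V, ∃ M : Finset (Sym2 V), IsMatch G M ∧ M.card = k ∧ ¬ cov M v := by
        intro v
        obtain ⟨M, h1, h2, h3⟩ := hess v
        exact ⟨M, h1, h2, h3⟩
      by_cases hconn : ∀ u w : V, u ∈ G.support → w ∈ G.support → G.Reachable u w
      · -- Case B2: support connected, apply Gallai
        have hgal := gallai hconn (by rw [hkeq]; exact hess')
        rw [hkeq] at hgal
        have h2e := two_ecard_le_supp (G := G)
        set s' := (Finset.univ.filter (fun v : V => v ∈ G.support)).card
        have hmul : s' * (s' - 1) ≤ (2 * k + 1) * (2 * k) :=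
          Nat.mul_le_mul hgal (by omega)
        have hrr : (2 * k + 1) * (2 * k) = 2 * ((2 * k + 1) * k) := by ring
        have h2X : 2 * Nat.card G.edgeSet ≤ 2 * ((2 * k + 1) * k) := by
          rw [← hrr]; exact h2e.trans hmul
        have hE : Nat.card G.edgeSet ≤ (2 * k + 1) * k :=
          Nat.le_of_mul_le_mul_left h2X (by norm_num)
        calc Nat.card G.edgeSet ≤ (2 * k + 1) * k := hE
          _ ≤ Δ * k := Nat.mul_le_mul_right _ hΔ
          _ = k * Δ := Nat.mul_comm _ _
      · -- Case B1: support disconnected, split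
        push_neg at hconn
        obtain ⟨u₀, w₀, hu₀, hw₀, hnr⟩ := hconn
        set S : Set V := {a | G.Reachable u₀ a} with hS
        have hclosed : ∀ a b : V, G.Adj a b → (a ∈ S ↔ b ∈ S) := by
          intro a b hab
          constructor
          · intro h; exact h.trans hab.reachable
          · intro h; exact h.trans hab.symm.reachable
        set G₁ := restr G S with hG₁
        set G₂ := restr G Sᶜ with hG₂
        have hG₁le : G₁ ≤ G := restr_le
        have hG₂le : G₂ ≤ G := restr_le
        -- matching numbers add
        obtain ⟨M₁, hM₁, hc₁⟩ := mnum_spec G₁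
        obtain ⟨M₂, hM₂, hc₂⟩ := mnum_spec G₂
        have hdisjM : ∀ e ∈ M₁, ∀ e' ∈ M₂, ∀ x : V, x ∈ e → x ∉ e' := by
          intro e he e' he' x hx hx'
          have h1 : x ∈ S := restr_edge_mem (hM₁.1 e he) x hx
          have h2 : x ∈ Sᶜ := restr_edge_mem (hM₂.1 e' he') x hx'
          exact h2 h1
        have hdisjF : Disjoint M₁ M₂ := by
          rw [Finset.disjoint_left]
          intro e he he'
          induction e using Sym2.ind with
          | _ a b => exact hdisjM _ he _ he' a (Sym2.mem_mk_left _ _) (Sym2.mem_mk_left _ _)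
        have hunion : IsMatch G (M₁ ∪ M₂) := by
          constructor
          · intro e he
            rcases Finset.mem_union.mp he with h | h
            · exact SimpleGraph.edgeSet_mono hG₁le (hM₁.1 e h)
            · exact SimpleGraph.edgeSet_mono hG₂le (hM₂.1 e h)
          · intro e he e' he' hne x hx hx'
            rcases Finset.mem_union.mp he with h | h <;>
              rcases Finset.mem_union.mp he' with h' | h'
            · exact hM₁.2 e h e' h' hne x hx hx'
            · exact hdisjM e h e' h' x hx hx'
            · exact hdisjM e' h' e h x hx' hx
            · exact hM₂.2 e h e' h' hne x hx hx'
        have hadd : mnum G₁ + mnum G₂ ≤ k := by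
          rw [← hc₁, ← hc₂, ← Finset.card_union_of_disjoint hdisjF, ← hkeq]
          exact le_mnum hunion
        -- both parts have an edge
        have hk₁ : 1 ≤ mnum G₁ := by
          obtain ⟨y, hy⟩ := hu₀
          have hadj : G₁.Adj u₀ y :=
            ⟨hy, Set.mem_setOf_eq ▸ SimpleGraph.Reachable.refl u₀, (hclosed u₀ y hy).mp
              (SimpleGraph.Reachable.refl u₀)⟩
          exact mnum_pos (SimpleGraph.mem_edgeSet G₁ |>.mpr hadj)
        have hk₂ : 1 ≤ mnum G₂ := by
          obtain ⟨y, hy⟩ := hw₀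
          have hw₀S : w₀ ∉ S := fun h => hnr h
          have hyS : y ∉ S := fun h => hw₀S ((hclosed w₀ y hy).mpr h)
          have hadj : G₂.Adj w₀ y := ⟨hy, hw₀S, hyS⟩
          exact mnum_pos (SimpleGraph.mem_edgeSet G₂ |>.mpr hadj)
        -- edge count splits
        have hesplit : Nat.card G.edgeSet ≤ Nat.card G₁.edgeSet + Nat.card G₂.edgeSet := by
          have hsub : G.edgeSet ⊆ G₁.edgeSet ∪ G₂.edgeSet := by
            intro e he
            induction e using Sym2.ind with
            | _ a b =>
              rw [SimpleGraph.mem_edgeSet] at he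
              by_cases h : a ∈ S
              · exact Or.inl (SimpleGraph.mem_edgeSet G₁ |>.mpr
                  ⟨he, h, (hclosed a b he).mp h⟩)
              · exact Or.inr (SimpleGraph.mem_edgeSet G₂ |>.mpr
                  ⟨he, h, fun h' => h ((hclosed a b he).mpr h')⟩)
          calc Nat.card G.edgeSet = G.edgeSet.ncard := Nat.card_coe_set_eq _
            _ ≤ (G₁.edgeSet ∪ G₂.edgeSet).ncard := Set.ncard_le_ncard hsub (Set.toFinite _)
            _ ≤ G₁.edgeSet.ncard + G₂.edgeSet.ncard := Set.ncard_union_le _ _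
            _ = Nat.card G₁.edgeSet + Nat.card G₂.edgeSet := by
                rw [Nat.card_coe_set_eq, Nat.card_coe_set_eq]
        -- apply IH to both parts
        have he₁ : Nat.card G₁.edgeSet ≤ Nat.card G.edgeSet := ecard_le_ecard hG₁le
        have he₂ : Nat.card G₂.edgeSet ≤ Nat.card G.edgeSet := ecard_le_ecard hG₂le
        have hIH₁ := ih (mnum G₁ + Nat.card G₁.edgeSet) (by omega) G₁ (mnum G₁) Δ le_rfl
          le_rfl (by omega) (fun w => (neighbor_card_le hG₁le w).trans (hdeg w))
        have hIH₂ := ih (mnum G₂ + Nat.card G₂.edgeSet) (by omega) G₂ (mnum G₂) Δ le_rfl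
          le_rfl (by omega) (fun w => (neighbor_card_le hG₂le w).trans (hdeg w))
        calc Nat.card G.edgeSet ≤ Nat.card G₁.edgeSet + Nat.card G₂.edgeSet := hesplit
          _ ≤ mnum G₁ * Δ + mnum G₂ * Δ := Nat.add_le_add hIH₁ hIH₂
          _ = (mnum G₁ + mnum G₂) * Δ := (Nat.add_mul _ _ _).symm
          _ ≤ k * Δ := Nat.mul_le_mul_right _ hadd

end Main

end CH
set_option linter.unusedSectionVars false
set_option maxHeartbeats 1000000

namespace CH

lemma card_filter_Ico {n : ℕ} (a b : ℕ) (hb : b ≤ n) :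
    (Finset.univ.filter (fun y : Fin n => a ≤ (y:ℕ) ∧ (y:ℕ) < b)).card = b - a := by
  rw [← Nat.card_Ico a b]
  apply Finset.card_bij (fun (y : Fin n) _ => (y : ℕ))
  · intro y hy
    rw [Finset.mem_filter] at hy
    exact Finset.mem_Ico.mpr hy.2
  · intro y hy y' hy' h
    exact Fin.ext h
  · intro m hm
    rw [Finset.mem_Ico] at hm
    exact ⟨⟨m, by omega⟩, Finset.mem_filter.mpr ⟨Finset.mem_univ _, hm.1, hm.2⟩, rfl⟩

def KG (n ν Δ : ℕ) : SimpleGraph (Fin n) where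
  Adj x y := ((x:ℕ) < ν ∧ ν ≤ (y:ℕ) ∧ (y:ℕ) < ν + Δ) ∨
    ((y:ℕ) < ν ∧ ν ≤ (x:ℕ) ∧ (x:ℕ) < ν + Δ)
  symm := by constructor; intro x y h; tauto
  loopless := by constructor; intro x h; rcases h with ⟨h1, h2, _⟩ | ⟨h1, h2, _⟩ <;> omega

instance KGdec (n ν Δ : ℕ) : DecidableRel (KG n ν Δ).Adj := fun x y =>
  inferInstanceAs (Decidable (((x:ℕ) < ν ∧ ν ≤ (y:ℕ) ∧ (y:ℕ) < ν + Δ) ∨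
    ((y:ℕ) < ν ∧ ν ≤ (x:ℕ) ∧ (x:ℕ) < ν + Δ)))

lemma KG_nf (n ν Δ : ℕ) (x : Fin n) :
    (KG n ν Δ).neighborFinset x = Finset.univ.filter (fun y => (KG n ν Δ).Adj x y) := by
  ext y
  simp [SimpleGraph.mem_neighborFinset]

lemma KG_degree_low {n ν Δ : ℕ} (hb : ν + Δ ≤ n) {x : Fin n} (hx : (x:ℕ) < ν) :
    (KG n ν Δ).degree x = Δ := by
  rw [← SimpleGraph.card_neighborFinset_eq_degree, KG_nf]
  have : Finset.univ.filter (fun y => (KG n ν Δ).Adj x y) =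
      Finset.univ.filter (fun y : Fin n => ν ≤ (y:ℕ) ∧ (y:ℕ) < ν + Δ) := by
    apply Finset.filter_congr
    intro y _
    constructor
    · rintro (⟨h1, h2, h3⟩ | ⟨h1, h2, h3⟩)
      · exact ⟨h2, h3⟩
      · omega
    · intro h
      exact Or.inl ⟨hx, h.1, h.2⟩
  rw [this, card_filter_Ico _ _ hb]
  omega

lemma KG_degree_mid {n ν Δ : ℕ} (hb : ν + Δ ≤ n) {x : Fin n} (hx1 : ν ≤ (x:ℕ))
    (hx2 : (x:ℕ) < ν + Δ) : (KG n ν Δ).degree x = ν := by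
  rw [← SimpleGraph.card_neighborFinset_eq_degree, KG_nf]
  have : Finset.univ.filter (fun y => (KG n ν Δ).Adj x y) =
      Finset.univ.filter (fun y : Fin n => 0 ≤ (y:ℕ) ∧ (y:ℕ) < ν) := by
    apply Finset.filter_congr
    intro y _
    constructor
    · rintro (⟨h1, h2, h3⟩ | ⟨h1, h2, h3⟩)
      · omega
      · exact ⟨Nat.zero_le _, h1⟩
    · intro h
      exact Or.inr ⟨h.2, hx1, hx2⟩
  rw [this, card_filter_Ico _ _ (by omega)]
  omega

lemma KG_degree_high {n ν Δ : ℕ} {x : Fin n} (hx : ν + Δ ≤ (x:ℕ)) (hν : 0 < ν) :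
    (KG n ν Δ).degree x = 0 := by
  rw [← SimpleGraph.card_neighborFinset_eq_degree, KG_nf]
  rw [Finset.card_eq_zero]
  ext y
  simp only [Finset.mem_filter, Finset.mem_univ, true_and, Finset.notMem_empty, iff_false]
  rintro (⟨h1, h2, h3⟩ | ⟨h1, h2, h3⟩) <;> omega

lemma KG_maxdeg {n ν Δ : ℕ} (hb : ν + Δ ≤ n) (hν : 0 < ν) (hνΔ : ν ≤ Δ) (x : Fin n) :
    Nat.card ((KG n ν Δ).neighborSet x) ≤ Δ := by
  have hcard : Nat.card ((KG n ν Δ).neighborSet x) = (KG n ν Δ).degree x := by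
    rw [← SimpleGraph.card_neighborSet_eq_degree, Nat.card_eq_fintype_card]
  rw [hcard]
  rcases Nat.lt_or_ge (x:ℕ) ν with h | h
  · rw [KG_degree_low hb h]
  · rcases Nat.lt_or_ge (x:ℕ) (ν + Δ) with h2 | h2
    · rw [KG_degree_mid hb h h2]; exact hνΔ
    · rw [KG_degree_high h2 hν]; exact Nat.zero_le _

lemma KG_ecard {n ν Δ : ℕ} (hb : ν + Δ ≤ n) (hν : 0 < ν) :
    Nat.card (KG n ν Δ).edgeSet = ν * Δ := by
  have he : Nat.card (KG n ν Δ).edgeSet = (KG n ν Δ).edgeFinset.card := by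
    rw [Nat.card_eq_fintype_card, SimpleGraph.edgeFinset_card]
  have hsum := SimpleGraph.sum_degrees_eq_twice_card_edges (KG n ν Δ)
  have hsplit : ∑ x : Fin n, (KG n ν Δ).degree x = ν * Δ + Δ * ν := by
    rw [← Finset.sum_filter_add_sum_filter_not Finset.univ (fun x : Fin n => (x:ℕ) < ν)]
    have h1 : ∑ x ∈ Finset.univ.filter (fun x : Fin n => (x:ℕ) < ν),
        (KG n ν Δ).degree x = ν * Δ := by
      rw [Finset.sum_congr rfl (fun x hx => KG_degree_low hb (Finset.mem_filter.mp hx).2)]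
      rw [Finset.sum_const, smul_eq_mul]
      congr 1
      have : (Finset.univ.filter (fun x : Fin n => (x:ℕ) < ν)) =
          (Finset.univ.filter (fun x : Fin n => 0 ≤ (x:ℕ) ∧ (x:ℕ) < ν)) := by
        apply Finset.filter_congr
        intro y _
        simp [Nat.zero_le]
      rw [this, card_filter_Ico _ _ (by omega)]
      omega
    have h2 : ∑ x ∈ Finset.univ.filter (fun x : Fin n => ¬ (x:ℕ) < ν),
        (KG n ν Δ).degree x = Δ * ν := by
      rw [← Finset.sum_filter_add_sum_filter_not
        (Finset.univ.filter (fun x : Fin n => ¬ (x:ℕ) < ν))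
        (fun x : Fin n => (x:ℕ) < ν + Δ)]
      have h3 : ∑ x ∈ (Finset.univ.filter (fun x : Fin n => ¬ (x:ℕ) < ν)).filter
          (fun x : Fin n => (x:ℕ) < ν + Δ), (KG n ν Δ).degree x = Δ * ν := by
        rw [Finset.filter_filter]
        have hcong : ∀ x ∈ Finset.univ.filter (fun x : Fin n => ¬ (x:ℕ) < ν ∧ (x:ℕ) < ν + Δ),
            (KG n ν Δ).degree x = ν := by
          intro x hx
          rw [Finset.mem_filter] at hx
          exact KG_degree_mid hb (by omega) hx.2.2
        rw [Finset.sum_congr rfl hcong, Finset.sum_const, smul_eq_mul]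
        have : (Finset.univ.filter (fun x : Fin n => ¬ (x:ℕ) < ν ∧ (x:ℕ) < ν + Δ)) =
            (Finset.univ.filter (fun x : Fin n => ν ≤ (x:ℕ) ∧ (x:ℕ) < ν + Δ)) := by
          apply Finset.filter_congr
          intro y _
          constructor
          · rintro ⟨h1, h2⟩; exact ⟨by omega, h2⟩
          · rintro ⟨h1, h2⟩; exact ⟨by omega, h2⟩
        rw [this, card_filter_Ico _ _ hb]
        have : ν + Δ - ν = Δ := by omega
        rw [this]
      have h4 : ∑ x ∈ (Finset.univ.filter (fun x : Fin n => ¬ (x:ℕ) < ν)).filter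
          (fun x : Fin n => ¬ (x:ℕ) < ν + Δ), (KG n ν Δ).degree x = 0 := by
        apply Finset.sum_eq_zero
        intro x hx
        rw [Finset.filter_filter, Finset.mem_filter] at hx
        exact KG_degree_high (by omega) hν
      omega
    omega
  rw [hsplit] at hsum
  rw [he]
  have hmc : Δ * ν = ν * Δ := Nat.mul_comm _ _
  omega

lemma KG_matchle {n ν Δ : ℕ} (hn : 0 < n) :
    ∀ s : Finset (Sym2 (Fin n)), (∀ e ∈ s, e ∈ (KG n ν Δ).edgeSet) →
    (∀ e ∈ s, ∀ e' ∈ s, e ≠ e' → ∀ x : Fin n, x ∈ e → x ∉ e') → s.card ≤ ν := by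
  intro s hedge hdisj
  classical
  have hex : ∀ e ∈ s, ∃ a : Fin n, a ∈ e ∧ (a:ℕ) < ν := by
    intro e he
    have := hedge e he
    induction e using Sym2.ind with
    | _ a b =>
      rw [SimpleGraph.mem_edgeSet] at this
      rcases this with ⟨h1, _, _⟩ | ⟨h1, _, _⟩
      · exact ⟨a, Sym2.mem_mk_left _ _, h1⟩
      · exact ⟨b, Sym2.mem_mk_right _ _, h1⟩
  set f : Sym2 (Fin n) → Fin n := fun e =>
    if h : ∃ a : Fin n, a ∈ e ∧ (a:ℕ) < ν then h.choose else ⟨0, hn⟩ with hf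
  have hfs : ∀ e ∈ s, f e ∈ e ∧ ((f e : ℕ) < ν) := by
    intro e he
    have h := hex e he
    rw [hf]
    simp only [dif_pos h]
    exact h.choose_spec
  have hcard : s.card ≤ (Finset.univ.filter (fun y : Fin n => 0 ≤ (y:ℕ) ∧ (y:ℕ) < ν)).card := by
    apply Finset.card_le_card_of_injOn f
    · intro e he
      exact Finset.mem_filter.mpr ⟨Finset.mem_univ _, Nat.zero_le _, (hfs e he).2⟩
    · intro e he e' he' heq
      by_contra hne
      exact hdisj e he e' he' hne (f e) (hfs e he).1 (heq ▸ (hfs e' he').1)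
  rcases le_or_gt ν n with hνn | hνn
  · rw [card_filter_Ico _ _ hνn] at hcard
    omega
  · -- ν > n : bound card by n
    have : (Finset.univ.filter (fun y : Fin n => 0 ≤ (y:ℕ) ∧ (y:ℕ) < ν)).card ≤ n := by
      calc _ ≤ (Finset.univ : Finset (Fin n)).card := Finset.card_le_card (Finset.filter_subset _ _)
        _ = n := by simp
    omega

end CH

/-- Chvátal–Hanson, case `Δ ≥ 2ν + 1`, `n ≥ ν + Δ + 1`.  Let
`n, ν, Δ` be positive integers with `Δ ≥ 2ν + 1` and `n ≥ ν + Δ + 1`.  Then the maximum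
number of edges of an `n`-vertex graph with matching number at most `ν` and maximum
degree at most `Δ` equals `ν · Δ`. -/
theorem stmt_19 (n ν Δ : ℕ) (hn : 0 < n) (hν : 0 < ν) (hΔ : 0 < Δ)
    (hΔν : 2 * ν + 1 ≤ Δ) (hnb : ν + Δ + 1 ≤ n) :
    (∀ G : SimpleGraph (Fin n),
      MatchingNumberLE G ν → MaxDegreeLE G Δ → eCount G ≤ ν * Δ) ∧
    (∃ G : SimpleGraph (Fin n),
      MatchingNumberLE G ν ∧ MaxDegreeLE G Δ ∧ eCount G = ν * Δ) := by
  constructor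
  · intro G hmle hdeg
    have hm : CH.mnum G ≤ ν := CH.mnum_le_iff.mpr (fun M hM => hmle M hM.1 hM.2)
    have hup := CH.upper (ν + Nat.card G.edgeSet) G ν Δ le_rfl hm hΔν hdeg
    exact hup
  · refine ⟨CH.KG n ν Δ, ?_, ?_, ?_⟩
    · intro s h1 h2
      exact CH.KG_matchle hn s h1 h2
    · intro v
      exact CH.KG_maxdeg (by omega) hν (by omega) v
    · exact CH.KG_ecard (by omega) hν
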